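/- Let λ, μ, α, β be nonzero complex numbers with α ≠ β, and suppose S_n = λα^n + μβ^n is a rational integer for every n ≥ n_0. Then α and β are algebraic integers of degree at most 2 over ℚ; more precisely, they are rational integers or conjugate quadratic algebraic integers, and λ ∈ ℚ(α), μ ∈ ℚ(β). -/

import Mathlib

lemma aux_den_dvd (x : ℚ) (n z : ℤ) (h : x * (n:ℚ) = z) : (x.den : ℤ) ∣ n := by
  have hden : (x.den : ℚ) ≠ 0 := by exact_mod_cast x.den_nz
  have h2 : (x.num : ℚ) * n = z * (x.den : ℚ) := by
    rw [← Rat.num_div_den x] at h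
    field_simp at h
    linarith
  have h3 : x.num * n = z * (x.den : ℤ) := by exact_mod_cast h2
  have hcop : IsCoprime (x.den : ℤ) x.num := by
    rw [Int.isCoprime_iff_gcd_eq_one]
    simpa [Int.gcd, Int.natAbs_natCast] using x.reduced.symm
  exact hcop.dvd_of_dvd_mul_left ⟨z, by linarith⟩

lemma aux_den_one (d : ℕ) (m : ℤ) (hm : m ≠ 0) (h : ∀ k : ℕ, ((d:ℤ))^k ∣ m) : d = 1 := by
  by_contra hd
  have hd0 : d ≠ 0 := by
    rintro rfl
    simpa [hm] using h 1
  have h2 : 2 ≤ d := by omega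
  have hk : d ^ m.natAbs ∣ m.natAbs := by
    have := Int.natAbs_dvd_natAbs.mpr (h m.natAbs)
    simpa [Int.natAbs_pow] using this
  have hle : d ^ m.natAbs ≤ m.natAbs := Nat.le_of_dvd (by simpa using hm) hk
  have : m.natAbs < 2 ^ m.natAbs := Nat.lt_two_pow_self
  have : 2 ^ m.natAbs ≤ d ^ m.natAbs := Nat.pow_le_pow_left h2 _
  omega

lemma aux_pow_int (x : ℚ) (m : ℤ) (hm : m ≠ 0) (h : ∀ k : ℕ, ∃ z : ℤ, x ^ k * m = z) :
    ∃ z : ℤ, x = z := by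
  have hden : ∀ k : ℕ, ((x.den : ℤ))^k ∣ m := by
    intro k
    obtain ⟨z, hz⟩ := h k
    have := aux_den_dvd (x^k) m z hz
    have hdk : (x^k).den = x.den ^ k := by rw [Rat.pow_def]
    rw [hdk] at this
    exact_mod_cast this
  have := aux_den_one x.den m hm hden
  exact ⟨x.num, ((Rat.den_eq_one_iff x).mp this).symm⟩

lemma aux_p_int (p : ℚ) (q H0 : ℤ) (hH0 : H0 ≠ 0) (D : ℕ → ℤ) (hD0 : D 0 = 0) (hD1 : D 1 = H0)
    (hrec : ∀ m, (D (m+2) : ℚ) = p * D (m+1) - q * D m) : ∃ z : ℤ, p = z := by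
  set b : ℤ := (p.den : ℤ) with hb
  have hbpos : (0:ℤ) < b := by rw [hb]; exact_mod_cast p.pos
  have key : ∀ k : ℕ, ∀ m, b^k ∣ D m := by
    intro k
    induction k with
    | zero => simp
    | succ k ih =>
      set E : ℕ → ℤ := fun m => D m / b^k with hEdef
      have hDE : ∀ m, b^k * E m = D m := fun m => Int.mul_ediv_cancel' (ih m)
      have hB : ((b:ℚ))^k ≠ 0 := by positivity
      have hdvdE : ∀ m, b ∣ E m := by
        intro m
        match m with
        | 0 =>
          have : E 0 = 0 := by simp [hEdef, hD0]
          simp [this]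
        | (m+1) =>
          have f0 : ((b:ℚ))^k * E m = (D m : ℚ) := by exact_mod_cast congrArg (Int.cast : ℤ → ℚ) (hDE m)
          have f1 : ((b:ℚ))^k * E (m+1) = (D (m+1) : ℚ) := by exact_mod_cast congrArg (Int.cast : ℤ → ℚ) (hDE (m+1))
          have f2 : ((b:ℚ))^k * E (m+2) = (D (m+2) : ℚ) := by exact_mod_cast congrArg (Int.cast : ℤ → ℚ) (hDE (m+2))
          have goal_eq : p * ((E (m+1) : ℤ) : ℚ) = ((E (m+2) + q * E m : ℤ) : ℚ) := by
            apply mul_left_cancel₀ hB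
            push_cast
            linear_combination p * f1 - f2 - (q:ℚ) * f0 - hrec m
          exact aux_den_dvd p (E (m+1)) (E (m+2) + q * E m) goal_eq
      intro m
      rw [pow_succ, ← hDE m]
      exact mul_dvd_mul_left _ (hdvdE m)
  have hden : p.den = 1 := aux_den_one p.den H0 hH0 (fun k => hD1 ▸ key k 1)
  exact ⟨p.num, ((Rat.den_eq_one_iff p).mp hden).symm⟩

theorem quadratic_of_integer_combination
    (lam mu α β : ℂ) (hlam : lam ≠ 0) (hmu : mu ≠ 0) (hα : α ≠ 0) (hβ : β ≠ 0)
    (hαβ : α ≠ β) (n₀ : ℕ)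
    (h : ∀ n : ℕ, n₀ ≤ n → ∃ z : ℤ, lam * α ^ n + mu * β ^ n = z) :
    IsIntegral ℤ α ∧ IsIntegral ℤ β ∧
    (((∃ a : ℤ, α = a) ∧ (∃ b : ℤ, β = b)) ∨
      ((minpoly ℚ α).natDegree = 2 ∧ minpoly ℚ α = minpoly ℚ β)) ∧
    lam ∈ (IntermediateField.adjoin ℚ {α} : IntermediateField ℚ ℂ) ∧
    mu ∈ (IntermediateField.adjoin ℚ {β} : IntermediateField ℚ ℂ) := by
  classical
  choose s hs' using fun n : ℕ => h (n₀ + n) (Nat.le_add_right _ _)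
  set L : ℂ := lam * α ^ n₀ with hLdef
  set M : ℂ := mu * β ^ n₀ with hMdef
  have hL : L ≠ 0 := mul_ne_zero hlam (pow_ne_zero _ hα)
  have hM : M ≠ 0 := mul_ne_zero hmu (pow_ne_zero _ hβ)
  have hs : ∀ n, (s n : ℂ) = L * α ^ n + M * β ^ n := by
    intro n
    rw [← hs' n, hLdef, hMdef, pow_add, pow_add]
    ring
  set H : ℕ → ℤ := fun n => s n * s (n+2) - (s (n+1))^2 with hHdef
  have hH : ∀ n, (H n : ℂ) = L * M * (α*β)^n * (α-β)^2 := by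
    intro n
    have e0 := hs n; have e1 := hs (n+1); have e2 := hs (n+2)
    push_cast [hHdef]
    rw [e0, e1, e2]
    ring
  have hcne : L * M * (α-β)^2 ≠ 0 :=
    mul_ne_zero (mul_ne_zero hL hM) (pow_ne_zero _ (sub_ne_zero.mpr hαβ))
  have hH0 : (H 0 : ℂ) = L * M * (α-β)^2 := by rw [hH 0]; ring
  have hH0ne : H 0 ≠ 0 := by
    intro hz
    rw [hz] at hH0
    exact hcne (by simpa using hH0.symm)
  have hH0Q : ((H 0 : ℚ) : ℂ) = L * M * (α-β)^2 := by push_cast; exact_mod_cast hH0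
  have hH0Qne : ((H 0 : ℚ)) ≠ 0 := by exact_mod_cast hH0ne
  -- α*β is rational
  set qq : ℚ := (H 1 : ℚ) / (H 0 : ℚ) with hqqdef
  have hq : α * β = (qq : ℂ) := by
    have h1 : (H 1 : ℂ) = (α*β) * (H 0 : ℂ) := by rw [hH 1, hH0]; ring
    have h2 : ((qq : ℚ) : ℂ) = (H 1 : ℂ) / (H 0 : ℂ) := by push_cast [hqqdef]; ring
    rw [h2, h1, mul_div_cancel_right₀]
    exact_mod_cast hH0ne
  -- α+β is rational
  set K : ℤ := s 0 * s 3 - s 1 * s 2 with hKdef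
  have hK : (K : ℂ) = L * M * (α+β) * (α-β)^2 := by
    have e0 := hs 0; have e1 := hs 1; have e2 := hs 2; have e3 := hs 3
    push_cast [hKdef]
    rw [e0, e1, e2, e3]
    ring
  set pp : ℚ := (K : ℚ) / (H 0 : ℚ) with hppdef
  have hp : α + β = (pp : ℂ) := by
    have h1 : (K : ℂ) = (α+β) * (H 0 : ℂ) := by rw [hK, hH0]; ring
    have h2 : ((pp : ℚ) : ℂ) = (K : ℂ) / (H 0 : ℂ) := by push_cast [hppdef]; ring
    rw [h2, h1, mul_div_cancel_right₀]
    exact_mod_cast hH0ne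
  -- α*β is an integer
  obtain ⟨qz, hqz⟩ : ∃ z : ℤ, qq = z := by
    apply aux_pow_int qq (H 0) hH0ne
    intro k
    refine ⟨H k, ?_⟩
    have : ((qq ^ k * (H 0 : ℚ) : ℚ) : ℂ) = ((H k : ℚ) : ℂ) := by
      push_cast
      rw [← hq, hH k, hH0]
      ring
    exact_mod_cast this
  have hqC : α * β = ((qz : ℤ) : ℂ) := by rw [hq, hqz]; push_cast; ring
  -- α+β is an integer
  set D : ℕ → ℤ := fun m => s 0 * s (m+1) - s 1 * s m with hDdef
  obtain ⟨pz, hpz⟩ : ∃ z : ℤ, pp = z := by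
    apply aux_p_int pp qz (H 0) hH0ne D
    · simp [hDdef]; ring
    · simp [hDdef, hHdef]; ring
    · intro m
      have : ((D (m+2) : ℚ) : ℂ) = ((pp * (D (m+1)) - (qz:ℚ) * (D m) : ℚ) : ℂ) := by
        have e0 := hs m; have e1 := hs (m+1); have e2 := hs (m+2); have e3 := hs (m+3)
        have ha := hs 0; have hb := hs 1
        push_cast [hDdef]
        rw [e0, e1, e2, e3, ha, hb, ← hp, ← hqC]
        ring
      exact_mod_cast this
  have hpC : α + β = ((pz : ℤ) : ℂ) := by rw [hp, hpz]; push_cast; ring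
  -- integrality
  have hmonicZ : (Polynomial.X^2 - Polynomial.C pz * Polynomial.X + Polynomial.C qz : Polynomial ℤ).Monic := by
    have h1 : (Polynomial.X^2 - Polynomial.C pz * Polynomial.X + Polynomial.C qz : Polynomial ℤ)
        = Polynomial.X^2 + (Polynomial.C (-pz) * Polynomial.X + Polynomial.C qz) := by
      push_cast [Polynomial.C_neg]; ring
    rw [h1]
    apply Polynomial.monic_X_pow_add
    refine lt_of_le_of_lt (Polynomial.degree_linear_le) ?_
    norm_num
  have hintα : IsIntegral ℤ α := by
    refine ⟨Polynomial.X^2 - Polynomial.C pz * Polynomial.X + Polynomial.C qz, hmonicZ, ?_⟩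
    simp only [Polynomial.eval₂_add, Polynomial.eval₂_sub, Polynomial.eval₂_mul,
      Polynomial.eval₂_pow, Polynomial.eval₂_X, Polynomial.eval₂_C]
    simp only [eq_intCast]
    linear_combination α * hpC - hqC
  have hintβ : IsIntegral ℤ β := by
    refine ⟨Polynomial.X^2 - Polynomial.C pz * Polynomial.X + Polynomial.C qz, hmonicZ, ?_⟩
    simp only [Polynomial.eval₂_add, Polynomial.eval₂_sub, Polynomial.eval₂_mul,
      Polynomial.eval₂_pow, Polynomial.eval₂_X, Polynomial.eval₂_C]
    simp only [eq_intCast]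
    linear_combination β * hpC - hqC
    -- memberships
  have hmemα : lam ∈ (IntermediateField.adjoin ℚ {α} : IntermediateField ℚ ℂ) := by
    set Kα := (IntermediateField.adjoin ℚ {α} : IntermediateField ℚ ℂ) with hKα
    have hαK : α ∈ Kα := IntermediateField.mem_adjoin_simple_self ℚ α
    have hβeq : β = (pz:ℂ) - α := by linear_combination hpC
    have hx : lam * (α ^ n₀ * (2*α - (pz:ℂ))) = (s 1 : ℂ) - ((pz:ℂ) - α) * (s 0 : ℂ) := by
      rw [hs 1, hs 0, hLdef, hMdef, hβeq]; ring
    have h2αp : (2*α - (pz:ℂ)) = α - β := by linear_combination hpC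
    have hy0 : α ^ n₀ * (2*α - (pz:ℂ)) ≠ 0 :=
      mul_ne_zero (pow_ne_zero _ hα) (by rw [h2αp]; exact sub_ne_zero.mpr hαβ)
    have hlam_eq : lam = ((s 1 : ℂ) - ((pz:ℂ) - α) * (s 0:ℂ)) * (α ^ n₀ * (2*α - (pz:ℂ)))⁻¹ := by
      rw [← hx]; field_simp
      exact (div_self (by rw [h2αp]; exact sub_ne_zero.mpr hαβ)).symm
    have h2K : (2:ℂ) ∈ Kα := by
      have := intCast_mem Kα (2:ℤ); exact_mod_cast this
    rw [hlam_eq]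
    exact mul_mem
      (sub_mem (intCast_mem Kα _) (mul_mem (sub_mem (intCast_mem Kα _) hαK) (intCast_mem Kα _)))
      (Kα.inv_mem (mul_mem (pow_mem hαK _)
        (sub_mem (mul_mem h2K hαK) (intCast_mem Kα _))))
  have hmemβ : mu ∈ (IntermediateField.adjoin ℚ {β} : IntermediateField ℚ ℂ) := by
    set Kβ := (IntermediateField.adjoin ℚ {β} : IntermediateField ℚ ℂ) with hKβ
    have hβK : β ∈ Kβ := IntermediateField.mem_adjoin_simple_self ℚ β
    have hαeq : α = (pz:ℂ) - β := by linear_combination hpC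
    have hx : mu * (β ^ n₀ * (2*β - (pz:ℂ))) = (s 1 : ℂ) - ((pz:ℂ) - β) * (s 0 : ℂ) := by
      rw [hs 1, hs 0, hLdef, hMdef, hαeq]; ring
    have h2βp : (2*β - (pz:ℂ)) = β - α := by linear_combination hpC
    have hy0 : β ^ n₀ * (2*β - (pz:ℂ)) ≠ 0 :=
      mul_ne_zero (pow_ne_zero _ hβ) (by rw [h2βp]; exact sub_ne_zero.mpr (Ne.symm hαβ))
    have hmu_eq : mu = ((s 1 : ℂ) - ((pz:ℂ) - β) * (s 0:ℂ)) * (β ^ n₀ * (2*β - (pz:ℂ)))⁻¹ := by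
      rw [← hx]; field_simp
      exact (div_self (by rw [h2βp]; exact sub_ne_zero.mpr (Ne.symm hαβ))).symm
    have h2K : (2:ℂ) ∈ Kβ := by
      have := intCast_mem Kβ (2:ℤ); exact_mod_cast this
    rw [hmu_eq]
    exact mul_mem
      (sub_mem (intCast_mem Kβ _) (mul_mem (sub_mem (intCast_mem Kβ _) hβK) (intCast_mem Kβ _)))
      (Kβ.inv_mem (mul_mem (pow_mem hβK _)
        (sub_mem (mul_mem h2K hβK) (intCast_mem Kβ _))))
  refine ⟨hintα, hintβ, ?_, hmemα, hmemβ⟩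
  -- dichotomy
  set fQ : Polynomial ℚ :=
    Polynomial.X^2 - Polynomial.C ((pz:ℚ)) * Polynomial.X + Polynomial.C ((qz:ℚ)) with hfQdef
  have hmonicQ : fQ.Monic := by
    have h1 : fQ = Polynomial.X^2 +
        (Polynomial.C (-(pz:ℚ)) * Polynomial.X + Polynomial.C ((qz:ℚ))) := by
      rw [hfQdef, Polynomial.C_neg]; ring
    rw [h1]
    apply Polynomial.monic_X_pow_add
    exact lt_of_le_of_lt (Polynomial.degree_linear_le) (by norm_num)
  have hdeg : fQ.natDegree = 2 := by
    rw [hfQdef]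
    compute_degree!
  have hfα : Polynomial.aeval α fQ = 0 := by
    rw [hfQdef]
    simp only [map_add, map_sub, map_mul, map_pow, Polynomial.aeval_X, Polynomial.aeval_C]
    simp only [eq_ratCast]
    push_cast
    linear_combination α * hpC - hqC
  have hfβ : Polynomial.aeval β fQ = 0 := by
    rw [hfQdef]
    simp only [map_add, map_sub, map_mul, map_pow, Polynomial.aeval_X, Polynomial.aeval_C]
    simp only [eq_ratCast]
    push_cast
    linear_combination β * hpC - hqC
  by_cases hratα : ∃ r : ℚ, α = (r : ℂ)
  · left
    obtain ⟨r, hr⟩ := hratα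
    have h1 : IsIntegral ℤ r := by
      have h2 : α = algebraMap ℚ ℂ r := by rw [hr, eq_ratCast]
      rw [h2] at hintα
      exact (isIntegral_algebraMap_iff ((algebraMap ℚ ℂ).injective)).mp hintα
    obtain ⟨a, ha⟩ := IsIntegrallyClosed.isIntegral_iff.mp h1
    have hαa : α = ((a:ℤ):ℂ) := by
      rw [hr, ← ha, eq_intCast]
      push_cast
      ring
    have hβb : β = ((pz - a : ℤ):ℂ) := by
      push_cast
      linear_combination hpC - hαa
    exact ⟨⟨a, hαa⟩, ⟨pz - a, hβb⟩⟩
  · right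
    have hQα : IsIntegral ℚ α := ⟨fQ, hmonicQ, hfα⟩
    have hQβ : IsIntegral ℚ β := ⟨fQ, hmonicQ, hfβ⟩
    have hratβ : ¬∃ r : ℚ, β = (r : ℂ) := by
      rintro ⟨r, hr⟩
      refine hratα ⟨(pz:ℚ) - r, ?_⟩
      push_cast
      linear_combination hpC - hr
    have hα2 : 2 ≤ (minpoly ℚ α).natDegree := by
      refine (minpoly.two_le_natDegree_iff hQα).mpr ?_
      rintro ⟨r, hr⟩
      exact hratα ⟨r, by rw [← hr, eq_ratCast]⟩
    have hβ2 : 2 ≤ (minpoly ℚ β).natDegree := by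
      refine (minpoly.two_le_natDegree_iff hQβ).mpr ?_
      rintro ⟨r, hr⟩
      exact hratβ ⟨r, by rw [← hr, eq_ratCast]⟩
    have hαf : fQ = minpoly ℚ α :=
      Polynomial.eq_of_monic_of_dvd_of_natDegree_le (minpoly.monic hQα) hmonicQ
        (minpoly.dvd ℚ α hfα) (by rw [hdeg]; exact hα2)
    have hβf : fQ = minpoly ℚ β :=
      Polynomial.eq_of_monic_of_dvd_of_natDegree_le (minpoly.monic hQβ) hmonicQ
        (minpoly.dvd ℚ β hfβ) (by rw [hdeg]; exact hβ2)
    exact ⟨by rw [← hαf, hdeg], by rw [← hαf, ← hβf]⟩
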